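/- Let x_1,…,x_n ∈ ℝ^d and μ_1,…,μ_k ∈ ℝ^d (k ≥ 1), and suppose every point has a unique nearest centroid: for each i there is j(i) with ‖x_i − μ_{j(i)}‖ < ‖x_i − μ_ℓ‖ for all ℓ ≠ j(i). Let γ_i = d_{i,(2)} − d_{i,(1)} be the margin (second-smallest minus smallest distance from x_i to the centroids) and γ_min = min_i γ_i > 0. Then for every σ > 0, every i, and every j, the softmax responsibilities satisfy |r_{ij}(σ) − 1_{\{j = j(i)\}}| ≤ (k−1)·exp(−γ_min²/(2σ²)). -/

import Mathlib

/-- If every point has a unique nearest centroid and all margins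
(second-smallest minus smallest centroid distance) are at least `γ_min > 0`, then
for every `σ > 0` the softmax responsibilities satisfy
`|r_{ij}(σ) − 1_{j = j(i)}| ≤ (k−1)·exp(−γ_min²/(2σ²))`. -/
theorem softmax_responsibility_deviation_bound
    (d n k : ℕ) (hk : 1 ≤ k)
    (x : Fin n → EuclideanSpace ℝ (Fin d))
    (μ : Fin k → EuclideanSpace ℝ (Fin d))
    (jmap : Fin n → Fin k)
    (hnear : ∀ i, ∀ ℓ, ℓ ≠ jmap i → ‖x i - μ (jmap i)‖ < ‖x i - μ ℓ‖)
    (γmin : ℝ) (hγ : 0 < γmin)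
    (hmargin : ∀ i, ∀ ℓ, ℓ ≠ jmap i → γmin ≤ ‖x i - μ ℓ‖ - ‖x i - μ (jmap i)‖)
    (σ : ℝ) (hσ : 0 < σ) (i : Fin n) (j : Fin k) :
    |Real.exp (-‖x i - μ j‖ ^ 2 / (2 * σ ^ 2)) /
        (∑ ℓ, Real.exp (-‖x i - μ ℓ‖ ^ 2 / (2 * σ ^ 2)))
      - (if j = jmap i then (1 : ℝ) else 0)|
      ≤ ((k : ℝ) - 1) * Real.exp (-γmin ^ 2 / (2 * σ ^ 2)) := by
  have hσ2 : (0:ℝ) < 2 * σ ^ 2 := by positivity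
  set a : Fin k → ℝ := fun ℓ => Real.exp (-‖x i - μ ℓ‖ ^ 2 / (2 * σ ^ 2)) with ha
  have hapos : ∀ ℓ, 0 < a ℓ := fun ℓ => Real.exp_pos _
  set S := ∑ ℓ, a ℓ with hS
  have hSpos : 0 < S := Finset.sum_pos (fun ℓ _ => hapos ℓ) ⟨jmap i, Finset.mem_univ _⟩
  set E := Real.exp (-γmin ^ 2 / (2 * σ ^ 2)) with hE
  have hEpos : 0 < E := Real.exp_pos _
  have key : ∀ ℓ, ℓ ≠ jmap i → a ℓ ≤ a (jmap i) * E := by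
    intro ℓ hℓ
    rw [ha]
    simp only
    rw [hE, ← Real.exp_add, Real.exp_le_exp]
    rw [← add_div]
    apply div_le_div_of_nonneg_right _ hσ2.le
    have h1 := hmargin i ℓ hℓ
    have h2 : (0:ℝ) ≤ ‖x i - μ (jmap i)‖ := norm_nonneg _
    nlinarith
  have haS : a (jmap i) ≤ S :=
    Finset.single_le_sum (fun ℓ _ => (hapos ℓ).le) (Finset.mem_univ (jmap i))
  have hsplit : ∑ ℓ ∈ Finset.univ.erase (jmap i), a ℓ + a (jmap i) = S :=
    Finset.sum_erase_add _ _ (Finset.mem_univ _)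
  have hcard : ((Finset.univ.erase (jmap i)).card : ℝ) = (k : ℝ) - 1 := by
    rw [Finset.card_erase_of_mem (Finset.mem_univ _)]
    simp [Nat.cast_sub hk]
  have hrest : ∑ ℓ ∈ Finset.univ.erase (jmap i), a ℓ ≤ ((k:ℝ) - 1) * (a (jmap i) * E) := by
    calc ∑ ℓ ∈ Finset.univ.erase (jmap i), a ℓ
        ≤ ∑ _ℓ ∈ Finset.univ.erase (jmap i), a (jmap i) * E :=
          Finset.sum_le_sum (fun ℓ hℓ => key ℓ (Finset.ne_of_mem_erase hℓ))
      _ = ((k:ℝ) - 1) * (a (jmap i) * E) := by rw [Finset.sum_const, nsmul_eq_mul, hcard]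
  by_cases hj : j = jmap i
  · subst hj
    rw [if_pos rfl, abs_sub_comm, abs_of_nonneg (by
      rw [sub_nonneg]; exact div_le_one_of_le₀ haS hSpos.le)]
    rw [sub_div' hSpos.ne', div_le_iff₀ hSpos] at *
    have hk1 : (0:ℝ) ≤ (k:ℝ) - 1 := by
      have : (1:ℝ) ≤ (k:ℝ) := by exact_mod_cast hk
      linarith
    have : S * 1 - a (jmap i) ≤ ((k:ℝ) - 1) * E * S := by
      have h1 : S * 1 - a (jmap i) = ∑ ℓ ∈ Finset.univ.erase (jmap i), a ℓ := by
        rw [mul_one, ← hsplit]; ring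
      rw [h1]
      calc ∑ ℓ ∈ Finset.univ.erase (jmap i), a ℓ ≤ ((k:ℝ) - 1) * (a (jmap i) * E) := hrest
        _ ≤ ((k:ℝ) - 1) * E * S := by nlinarith [mul_le_mul_of_nonneg_left haS hEpos.le, mul_le_mul_of_nonneg_left (mul_le_mul_of_nonneg_left haS hEpos.le) hk1]
    linarith [this]
  · rw [if_neg hj, sub_zero, abs_of_nonneg (by positivity)]
    have hk2 : (1:ℝ) ≤ (k:ℝ) - 1 := by
      have : Nontrivial (Fin k) := ⟨⟨j, jmap i, hj⟩⟩
      have h2 : 2 ≤ k := by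
        have := Fintype.one_lt_card_iff_nontrivial.mpr this
        simp at this; omega
      have : (2:ℝ) ≤ (k:ℝ) := by exact_mod_cast h2
      linarith
    rw [div_le_iff₀ hSpos]
    calc a j ≤ a (jmap i) * E := key j hj
      _ ≤ 1 * (E * S) := by nlinarith
      _ ≤ ((k:ℝ) - 1) * E * S := by nlinarith [mul_pos hEpos hSpos]
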